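/- Let 0 < β < 1/100 and I = (−1,1) \ [−β, β], and define P(z) = (i/π)∫_I dt/(z−t). Then for all real z ∈ (−β, β), Im P'(z) < −1/(2β). -/

import Mathlib

open Set MeasureTheory Complex

lemma integral_neg_inv_sq (a b x : ℝ) (hab : a ≤ b) (hx : ∀ t ∈ Set.Icc a b, x ≠ t) :
    ∫ t in Set.Ioo a b, -((((x:ℂ) - t))^2)⁻¹ = ((x:ℂ) - a)⁻¹ - ((x:ℂ) - b)⁻¹ := by
  have hne : ∀ t ∈ Set.Icc a b, ((x:ℂ) - t) ≠ 0 := by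
    intro t ht h
    exact hx t ht (by exact_mod_cast sub_eq_zero.mp h)
  rw [← integral_Ioc_eq_integral_Ioo, ← intervalIntegral.integral_of_le hab]
  have key : ∫ t in a..b, (((x:ℂ) - t)^2)⁻¹ = ((x:ℂ) - b)⁻¹ - ((x:ℂ) - a)⁻¹ := by
    apply intervalIntegral.integral_eq_sub_of_hasDerivAt
    · intro t ht
      rw [Set.uIcc_of_le hab] at ht
      have h1 : HasDerivAt (fun t : ℝ => (x:ℂ) - t) (-1) t := by
        simpa using (Complex.ofRealCLM.hasDerivAt (x := t)).const_sub (x:ℂ)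
      have h2 := (hasDerivAt_inv (hne t ht)).scomp t h1
      simp only [Function.comp_def] at h2
      convert h2 using 1
      simp [smul_eq_mul]
    · apply ContinuousOn.intervalIntegrable
      rw [Set.uIcc_of_le hab]
      exact (ContinuousOn.pow (by fun_prop) 2).inv₀ (fun t ht => pow_ne_zero _ (hne t ht))
  rw [intervalIntegral.integral_neg, key]
  ring


/-- The Poisson-type integral `P(X,z) = (i/π) ∫_X dt/(z-t)`. -/
noncomputable def P (X : Set ℝ) (z : ℂ) : ℂ :=
  (Complex.I / (Real.pi : ℂ)) * ∫ t in X, (z - (t : ℂ))⁻¹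

set_option maxHeartbeats 2000000 in
/-- For `0 < β < 1/100`, `I = (-1,1) \ [-β,β]` and real `x ∈ (-β,β)`,
`Im P'(I, x) < -1/(2β)`. -/
theorem P_deriv_im_neg_on_gap (β : ℝ) (hβ0 : 0 < β) (hβ : β < 1 / 100)
    (x : ℝ) (hx : x ∈ Set.Ioo (-β) β) :
    (deriv (P (Set.Ioo (-1 : ℝ) 1 \ Set.Icc (-β) β)) (x : ℂ)).im < -(1 / (2 * β)) := by
  obtain ⟨hx1, hx2⟩ := hx
  set X : Set ℝ := Set.Ioo (-1 : ℝ) 1 \ Set.Icc (-β) β with hX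
  have hXm : MeasurableSet X := measurableSet_Ioo.diff measurableSet_Icc
  have hXfin : volume X < ⊤ := by
    refine lt_of_le_of_lt (measure_mono (Set.diff_subset.trans Set.Ioo_subset_Icc_self)) ?_
    rw [Real.volume_Icc]
    exact ENNReal.ofReal_lt_top
  have habs : |x| < β := abs_lt.2 ⟨hx1, hx2⟩
  set δ : ℝ := β - |x| with hδ
  have hδ0 : 0 < δ := by simp only [hδ]; linarith
  have hdist : ∀ t ∈ X, δ ≤ ‖(x:ℂ) - (t:ℂ)‖ := by
    intro t ht
    have h : ((x:ℂ) - (t:ℂ)) = ((x - t : ℝ) : ℂ) := by push_cast; ring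
    rw [h, Complex.norm_real, Real.norm_eq_abs]
    have ht2 : β ≤ |t| := by
      obtain ⟨⟨h1, h2⟩, h3⟩ := ht
      simp only [Set.mem_Icc, not_and, not_le] at h3
      rcases lt_or_ge t (-β) with h | h
      · exact le_abs.2 (Or.inr (by linarith))
      · exact le_abs.2 (Or.inl (le_of_lt (h3 h)))
    have h4 : |t| - |x| ≤ |t - x| := abs_sub_abs_le_abs_sub t x
    have h5 : |t - x| = |x - t| := abs_sub_comm t x
    simp only [hδ]
    linarith
  set ε : ℝ := δ / 2 with hε
  have hε0 : 0 < ε := by positivity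
  have hball : ∀ z ∈ Metric.ball (x:ℂ) ε, ∀ t ∈ X, ε ≤ ‖z - (t:ℂ)‖ := by
    intro z hz t ht
    have h1 : ‖(x:ℂ) - z‖ < ε := by
      rw [norm_sub_rev, ← dist_eq_norm]
      exact Metric.mem_ball.1 hz
    have h2 := hdist t ht
    have h3 : ‖(x:ℂ) - (t:ℂ)‖ ≤ ‖(x:ℂ) - z‖ + ‖z - (t:ℂ)‖ :=
      norm_sub_le_norm_sub_add_norm_sub _ _ _
    have hεδ : ε = δ / 2 := hε
    linarith
  have hmain := hasDerivAt_integral_of_dominated_loc_of_deriv_le (μ := volume.restrict X)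
      (F := fun (z : ℂ) (t : ℝ) => (z - (t:ℂ))⁻¹)
      (F' := fun (z : ℂ) (t : ℝ) => -((z - (t:ℂ))^2)⁻¹)
      (x₀ := (x:ℂ)) (s := Metric.ball (x:ℂ) ε) (bound := fun _ => (ε^2)⁻¹) (Metric.ball_mem_nhds _ hε0)
      (Filter.Eventually.of_forall fun z =>
        ((measurable_const.sub Complex.measurable_ofReal).inv).aestronglyMeasurable)
      ?_ ?_ ?_ ?_ ?_
  · obtain ⟨hint, hderiv⟩ := hmain
    have hXeq : X = Set.Ioo (-1 : ℝ) (-β) ∪ Set.Ioo β 1 := by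
      ext t
      simp only [hX, Set.mem_diff, Set.mem_Ioo, Set.mem_Icc, Set.mem_union, not_and, not_le]
      constructor
      · rintro ⟨⟨h1, h2⟩, h3⟩
        rcases lt_or_ge t (-β) with h | h
        · exact Or.inl ⟨h1, h⟩
        · exact Or.inr ⟨h3 h, h2⟩
      · rintro (⟨h1, h2⟩ | ⟨h1, h2⟩)
        · exact ⟨⟨h1, by linarith⟩, fun h => by linarith⟩
        · exact ⟨⟨by linarith, h2⟩, fun h => by linarith⟩
    have hdisj : Disjoint (Set.Ioo (-1 : ℝ) (-β)) (Set.Ioo β 1) := by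
      rw [Set.disjoint_left]
      rintro t ⟨_, h2⟩ ⟨h3, _⟩
      linarith
    have hi1 : IntegrableOn (fun t : ℝ => -(((x:ℂ) - t)^2)⁻¹) (Set.Ioo (-1 : ℝ) (-β)) :=
      IntegrableOn.mono_set (t := X) hint (by rw [hXeq]; exact Set.subset_union_left)
    have hi2 : IntegrableOn (fun t : ℝ => -(((x:ℂ) - t)^2)⁻¹) (Set.Ioo β 1) :=
      IntegrableOn.mono_set (t := X) hint (by rw [hXeq]; exact Set.subset_union_right)
    have hsplit : ∫ t in X, -(((x:ℂ) - t)^2)⁻¹ =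
        (∫ t in Set.Ioo (-1 : ℝ) (-β), -(((x:ℂ) - t)^2)⁻¹) +
        ∫ t in Set.Ioo β 1, -(((x:ℂ) - t)^2)⁻¹ := by
      rw [hXeq]
      exact setIntegral_union hdisj measurableSet_Ioo hi1 hi2
    have hv1 : ∫ t in Set.Ioo (-1 : ℝ) (-β), -(((x:ℂ) - t)^2)⁻¹ =
        ((x:ℂ) - ((-1:ℝ):ℂ))⁻¹ - ((x:ℂ) - ((-β:ℝ):ℂ))⁻¹ :=
      integral_neg_inv_sq (-1) (-β) x (by linarith) (fun t ht => by
        obtain ⟨_, h2⟩ := ht; intro h; linarith [h ▸ hx1])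
    have hv2 : ∫ t in Set.Ioo β 1, -(((x:ℂ) - t)^2)⁻¹ =
        ((x:ℂ) - ((β:ℝ):ℂ))⁻¹ - ((x:ℂ) - ((1:ℝ):ℂ))⁻¹ :=
      integral_neg_inv_sq β 1 x (by linarith) (fun t ht => by
        obtain ⟨h1, _⟩ := ht; intro h; linarith [h ▸ hx2])
    set r : ℝ := (x + 1)⁻¹ - (x + β)⁻¹ + ((x - β)⁻¹ - (x - 1)⁻¹) with hr
    have hcast : ∫ t in X, -(((x:ℂ) - t)^2)⁻¹ = ((r : ℝ) : ℂ) := by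
      rw [hsplit, hv1, hv2, hr]
      push_cast
      ring
    have hPd : HasDerivAt (P X) ((Complex.I / (Real.pi : ℂ)) * ((r : ℝ) : ℂ)) (x:ℂ) := by
      have := hderiv.const_mul (Complex.I / (Real.pi : ℂ))
      rw [hcast] at this
      exact this
    rw [hPd.deriv]
    have him : ((Complex.I / (Real.pi : ℂ)) * ((r : ℝ) : ℂ)).im = r / Real.pi := by
      rw [div_mul_eq_mul_div, Complex.div_im]
      simp [Complex.mul_im, Complex.mul_re, Complex.normSq_ofReal]
      rw [div_eq_div_iff (by positivity) Real.pi_ne_zero]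
      ring
    rw [him]
    -- final inequality
    have hπlt : Real.pi < 3.15 := by linarith [Real.pi_lt_d2]
    have hA : 0 < x + β := by linarith
    have hB : 0 < β - x := by linarith
    have hc0 : 0 < β⁻¹ := by positivity
    have hc : β * β⁻¹ = 1 := mul_inv_cancel₀ hβ0.ne'
    have hc100 : 100 < β⁻¹ := by
      nlinarith [mul_pos hc0 (show (0:ℝ) < 1/100 - β by linarith)]
    have hAB : 2 * β⁻¹ ≤ (x + β)⁻¹ + (β - x)⁻¹ := by
      have e1 : 2 * β⁻¹ = 2 * β / β^2 := by field_simp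
      have e2 : (x + β)⁻¹ + (β - x)⁻¹ = 2 * β / ((x + β) * (β - x)) := by
        field_simp
        ring
      rw [e1, e2]
      apply div_le_div_of_nonneg_left (by positivity) (by positivity)
      nlinarith [sq_nonneg x]
    have h1x : (x + 1)⁻¹ < 1.02 := by
      rw [inv_lt_iff_one_lt_mul₀ (by linarith)]
      nlinarith
    have h2x : (1 - x)⁻¹ < 1.02 := by
      rw [inv_lt_iff_one_lt_mul₀ (by linarith)]
      nlinarith
    have e3 : (x - β)⁻¹ = -(β - x)⁻¹ := by
      rw [show x - β = -(β - x) by ring, neg_inv]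
    have e4 : (x - 1)⁻¹ = -(1 - x)⁻¹ := by
      rw [show x - 1 = -(1 - x) by ring, neg_inv]
    have hrb : r < 2.04 - 2 * β⁻¹ := by
      rw [hr, e3, e4]
      linarith
    rw [div_lt_iff₀ Real.pi_pos]
    have e5 : -(1 / (2 * β)) * Real.pi = -(β⁻¹ * Real.pi / 2) := by
      field_simp
    rw [e5]
    nlinarith [mul_lt_mul_of_pos_left hπlt (show (0:ℝ) < β⁻¹ / 2 by positivity)]
  · -- hF_int
    apply Integrable.mono' (g := fun _ : ℝ => δ⁻¹)
    · exact integrableOn_const hXfin.ne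
    · exact ((measurable_const.sub Complex.measurable_ofReal).inv).aestronglyMeasurable
    · rw [ae_restrict_iff' hXm]
      refine Filter.Eventually.of_forall fun t ht => ?_
      rw [norm_inv]
      exact inv_anti₀ hδ0 (hdist t ht)
  · exact ((((measurable_const.sub Complex.measurable_ofReal).pow_const 2).inv).neg).aestronglyMeasurable
  · rw [ae_restrict_iff' hXm]
    refine Filter.Eventually.of_forall fun t ht z hz => ?_
    rw [norm_neg, norm_inv, norm_pow]
    apply inv_anti₀ (by positivity)
    exact pow_le_pow_left₀ (le_of_lt hε0) (hball z hz t ht) 2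
  · exact integrableOn_const hXfin.ne
  · rw [ae_restrict_iff' hXm]
    refine Filter.Eventually.of_forall fun t ht z hz => ?_
    have hne : z - (t:ℂ) ≠ 0 := by
      intro h
      have := hball z hz t ht
      rw [h, norm_zero] at this
      linarith
    have h1 : HasDerivAt (fun z : ℂ => z - (t:ℂ)) 1 z := (hasDerivAt_id z).sub_const _
    have h2 := h1.inv hne
    convert h2 using 1
    · rfl
    · rfl
    · ring
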